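/- The function g(x) = (cosh x - 1)(e^x - 1) - (sinh x - x)e^x satisfies g(x) > 0 for all x > 0 and g(x) < 0 for all x < 0. -/

import Mathlib

open Real Set

private lemma key_ineq (t : ℝ) (ht : t ≠ 0) : 0 < t * Real.exp t - Real.exp t + 1 := by
  have h := Real.add_one_lt_exp (x := -t) (by simpa using ht)
  have hpos := Real.exp_pos t
  have hmul : Real.exp (-t) * Real.exp t = 1 := by
    rw [← Real.exp_add]; simp
  nlinarith [mul_lt_mul_of_pos_right h hpos]

private lemma deriv_pos (x : ℝ) (hx : x ≠ 0) : 0 < x * Real.exp x - Real.sinh x := by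
  have key := key_ineq (2 * x) (by simpa using hx)
  have h1 : Real.exp (-x) * Real.exp x = 1 := by rw [← Real.exp_add]; simp
  have h2 : Real.exp x * Real.exp x = Real.exp (2 * x) := by
    rw [← Real.exp_add]; ring_nf
  have hpos := Real.exp_pos x
  have hneg := Real.exp_pos (-x)
  rw [Real.sinh_eq]
  nlinarith [mul_pos hneg hpos]

private lemma hasDerivAt_g (x : ℝ) :
    HasDerivAt (fun x : ℝ =>
      (Real.cosh x - 1) * (Real.exp x - 1) - (Real.sinh x - x) * Real.exp x)
      (x * Real.exp x - Real.sinh x) x := by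
  have h1 : HasDerivAt (fun x : ℝ => (Real.cosh x - 1) * (Real.exp x - 1))
      (Real.sinh x * (Real.exp x - 1) + (Real.cosh x - 1) * Real.exp x) x := by
    exact (((Real.hasDerivAt_cosh x).sub_const 1).mul
      ((Real.hasDerivAt_exp x).sub_const 1))
  have h2 : HasDerivAt (fun x : ℝ => (Real.sinh x - x) * Real.exp x)
      ((Real.cosh x - 1) * Real.exp x + (Real.sinh x - x) * Real.exp x) x := by
    exact (((Real.hasDerivAt_sinh x).sub (hasDerivAt_id x)).mul (Real.hasDerivAt_exp x))
  have := h1.sub h2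
  exact this.congr_deriv (by ring)

theorem stmt12 :
    let g : ℝ → ℝ := fun x =>
      (Real.cosh x - 1) * (Real.exp x - 1) - (Real.sinh x - x) * Real.exp x
    (∀ x : ℝ, 0 < x → 0 < g x) ∧ (∀ x : ℝ, x < 0 → g x < 0) := by
  intro g
  have hg0 : g 0 = 0 := by simp [g]
  have hcont : Continuous g := by
    fun_prop
  have hderiv : ∀ x : ℝ, HasDerivAt g (x * Real.exp x - Real.sinh x) x :=
    fun x => hasDerivAt_g x
  constructor
  · intro x hx
    have hmono : StrictMonoOn g (Ici (0 : ℝ)) := by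
      apply strictMonoOn_of_deriv_pos (convex_Ici 0) (hcont.continuousOn)
      intro y hy
      rw [interior_Ici] at hy
      rw [(hderiv y).deriv]
      exact deriv_pos y (ne_of_gt hy)
    have := hmono (by simp) (by exact le_of_lt hx) hx
    rwa [hg0] at this
  · intro x hx
    have hmono : StrictMonoOn g (Iic (0 : ℝ)) := by
      apply strictMonoOn_of_deriv_pos (convex_Iic 0) (hcont.continuousOn)
      intro y hy
      rw [interior_Iic] at hy
      rw [(hderiv y).deriv]
      exact deriv_pos y (ne_of_lt hy)
    have := hmono (by exact le_of_lt hx) (by simp) hx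
    rwa [hg0] at this
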